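/- (Imprecision growth bound) Let E̅₀, E_₀ be the upper and lower expectation functionals of a credal set, T̅, T_ the upper and lower transition operators of an imprecise Markov chain, Iₙ = d(E̅₀∘T̅ⁿ, E_₀∘T_ⁿ) the degree of imprecision at time n, Î = d(T̅, T_) := max_x max_{f∈L₁}((T̅f)(x) - (T_f)(x)), and ρᵢ = ρ(T̅ⁱ). Then Iₙ ≤ I₀·ρₙ + Î·Σ_{i=0}^{n-1} ρᵢ. -/

import Mathlib

open Finset Set

noncomputable section

/-- Functions with values in [0,1]. -/
def L1 (X : Type*) : Set (X → ℝ) := {f | ∀ x, 0 ≤ f x ∧ f x ≤ 1}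

/-- Probability mass function on a finite set. -/
def IsPMF {X : Type*} [Fintype X] (p : X → ℝ) : Prop :=
  (∀ x, 0 ≤ p x) ∧ ∑ x, p x = 1

/-- A credal set: nonempty compact convex set of pmfs. -/
def IsCredal {X : Type*} [Fintype X] (M : Set (X → ℝ)) : Prop :=
  M.Nonempty ∧ IsCompact M ∧ Convex ℝ M ∧ ∀ p ∈ M, IsPMF p

/-- Linear expectation with respect to a pmf. -/
def linExp {X : Type*} [Fintype X] (p f : X → ℝ) : ℝ := ∑ x, p x * f x

/-- Upper expectation functional of a credal set. -/
def upperExp {X : Type*} [Fintype X] (M : Set (X → ℝ)) (f : X → ℝ) : ℝ :=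
  sSup ((fun p => linExp p f) '' M)

/-- Lower expectation functional of a credal set. -/
def lowerExp {X : Type*} [Fintype X] (M : Set (X → ℝ)) (f : X → ℝ) : ℝ :=
  sInf ((fun p => linExp p f) '' M)

/-- Chebyshev (sup) distance between functions. -/
def dCheb {X : Type*} (f g : X → ℝ) : ℝ := ⨆ x, |f x - g x|

/-- Distance between two (upper) expectation functionals. -/
def dFun {X : Type*} (F G : (X → ℝ) → ℝ) : ℝ :=
  sSup ((fun f => |F f - G f|) '' L1 X)

/-- Distance between an upper and a lower expectation functional. -/
def dUL {X : Type*} (F G : (X → ℝ) → ℝ) : ℝ :=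
  sSup ((fun f => F f - G f) '' L1 X)

/-- Upper transition operator: rows are upper expectation functionals. -/
def IsUpperTrans {X : Type*} [Fintype X] (T : (X → ℝ) → (X → ℝ)) : Prop :=
  ∃ M : X → Set (X → ℝ), (∀ x, IsCredal (M x)) ∧ ∀ f x, T f x = upperExp (M x) f

/-- Matching pair of upper and lower transition operators from the same credal sets. -/
def IsTransPair {X : Type*} [Fintype X] (T Tl : (X → ℝ) → (X → ℝ)) : Prop :=
  ∃ M : X → Set (X → ℝ), (∀ x, IsCredal (M x)) ∧
    (∀ f x, T f x = upperExp (M x) f) ∧ (∀ f x, Tl f x = lowerExp (M x) f)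

/-- Distance between two (upper) transition operators. -/
def dOp {X : Type*} (T T' : (X → ℝ) → (X → ℝ)) : ℝ :=
  sSup ((fun f => dCheb (T f) (T' f)) '' L1 X)

/-- Imprecision distance between an upper and a lower transition operator. -/
def dOpUL {X : Type*} (T Tl : (X → ℝ) → (X → ℝ)) : ℝ :=
  sSup ((fun f => ⨆ x, (T f x - Tl f x)) '' L1 X)

/-- Weak coefficient of ergodicity. -/
def rho {X : Type*} (T : (X → ℝ) → (X → ℝ)) : ℝ :=
  sSup {r | ∃ f ∈ L1 X, ∃ x y : X, r = |T f x - T f y|}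

namespace Stmt15Aux

variable {X : Type*} [Fintype X]

lemma linExp_le {p f : X → ℝ} (hp : IsPMF p) {c : ℝ} (hf : ∀ x, f x ≤ c) :
    linExp p f ≤ c := by
  have h : linExp p f ≤ ∑ x, p x * c :=
    Finset.sum_le_sum fun x _ => mul_le_mul_of_nonneg_left (hf x) (hp.1 x)
  simpa [← Finset.sum_mul, hp.2] using h

lemma le_linExp {p f : X → ℝ} (hp : IsPMF p) {c : ℝ} (hf : ∀ x, c ≤ f x) :
    c ≤ linExp p f := by
  have h : (∑ x, p x * c) ≤ linExp p f :=
    Finset.sum_le_sum fun x _ => mul_le_mul_of_nonneg_left (hf x) (hp.1 x)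
  simpa [← Finset.sum_mul, hp.2] using h

lemma linExp_mono {p f g : X → ℝ} (hp : IsPMF p) (h : ∀ x, f x ≤ g x) :
    linExp p f ≤ linExp p g :=
  Finset.sum_le_sum fun x _ => mul_le_mul_of_nonneg_left (h x) (hp.1 x)

lemma linExp_add_const {p g : X → ℝ} (hp : IsPMF p) (c : ℝ) :
    linExp p (fun x => g x + c) = linExp p g + c := by
  unfold linExp
  rw [show (∑ x, p x * (g x + c)) = ∑ x, (p x * g x + p x * c) from
    Finset.sum_congr rfl fun x _ => by ring,
    Finset.sum_add_distrib, ← Finset.sum_mul, hp.2, one_mul]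

lemma continuous_linExp (f : X → ℝ) : Continuous fun p : X → ℝ => linExp p f := by
  unfold linExp
  exact continuous_finset_sum _ fun x _ => (continuous_apply x).mul continuous_const

variable {M : Set (X → ℝ)}

lemma img_ne (hM : IsCredal M) (f : X → ℝ) :
    ((fun p => linExp p f) '' M).Nonempty := hM.1.image _

lemma img_compact (hM : IsCredal M) (f : X → ℝ) :
    IsCompact ((fun p => linExp p f) '' M) := hM.2.1.image (continuous_linExp f)

lemma exists_upper (hM : IsCredal M) (f : X → ℝ) :
    ∃ p ∈ M, upperExp M f = linExp p f := by
  have h := (img_compact hM f).sSup_mem (img_ne hM f)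
  obtain ⟨p, hp, he⟩ := h
  exact ⟨p, hp, he.symm⟩

lemma exists_lower (hM : IsCredal M) (f : X → ℝ) :
    ∃ p ∈ M, lowerExp M f = linExp p f := by
  have h := (img_compact hM f).sInf_mem (img_ne hM f)
  obtain ⟨p, hp, he⟩ := h
  exact ⟨p, hp, he.symm⟩

lemma le_upperExp (hM : IsCredal M) {p : X → ℝ} (hp : p ∈ M) (f : X → ℝ) :
    linExp p f ≤ upperExp M f :=
  le_csSup (img_compact hM f).bddAbove ⟨p, hp, rfl⟩

lemma lowerExp_le (hM : IsCredal M) {p : X → ℝ} (hp : p ∈ M) (f : X → ℝ) :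
    lowerExp M f ≤ linExp p f :=
  csInf_le (img_compact hM f).bddBelow ⟨p, hp, rfl⟩

lemma upperExp_le_of (hM : IsCredal M) {f : X → ℝ} {c : ℝ} (hf : ∀ x, f x ≤ c) :
    upperExp M f ≤ c := by
  obtain ⟨p, hp, he⟩ := exists_upper hM f
  rw [he]; exact linExp_le (hM.2.2.2 p hp) hf

lemma le_lowerExp_of (hM : IsCredal M) {f : X → ℝ} {c : ℝ} (hf : ∀ x, c ≤ f x) :
    c ≤ lowerExp M f := by
  obtain ⟨p, hp, he⟩ := exists_lower hM f
  rw [he]; exact le_linExp (hM.2.2.2 p hp) hf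

lemma upperExp_zero (hM : IsCredal M) : upperExp M (0 : X → ℝ) = 0 := by
  obtain ⟨p, hp, he⟩ := exists_upper hM 0
  rw [he]; simp [linExp]

lemma lowerExp_zero (hM : IsCredal M) : lowerExp M (0 : X → ℝ) = 0 := by
  obtain ⟨p, hp, he⟩ := exists_lower hM 0
  rw [he]; simp [linExp]

lemma lowerExp_add_le (hM : IsCredal M) {g g' : X → ℝ} {c : ℝ}
    (h : ∀ x, g x ≤ g' x + c) : lowerExp M g ≤ lowerExp M g' + c := by
  obtain ⟨q, hq, he⟩ := exists_lower hM g'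
  have hq' : IsPMF q := hM.2.2.2 q hq
  calc lowerExp M g ≤ linExp q g := lowerExp_le hM hq g
    _ ≤ linExp q (fun x => g' x + c) := linExp_mono hq' h
    _ = linExp q g' + c := linExp_add_const hq' c
    _ = lowerExp M g' + c := by rw [he]

/-- Key scaling lemma. -/
lemma diff_le [Nonempty X] (hM : IsCredal M) {g : X → ℝ} {b a D : ℝ}
    (hb : ∀ x, b ≤ g x) (ha : ∀ x, g x ≤ a)
    (hD : ∀ h ∈ L1 X, upperExp M h - lowerExp M h ≤ D) :
    upperExp M g - lowerExp M g ≤ D * (a - b) := by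
  obtain ⟨p, hp, hep⟩ := exists_upper hM g
  obtain ⟨q, hq, heq⟩ := exists_lower hM g
  have hpp : IsPMF p := hM.2.2.2 p hp
  have hqq : IsPMF q := hM.2.2.2 q hq
  rcases lt_or_ge b a with hab | hab
  · set h : X → ℝ := fun x => (g x - b) / (a - b) with hh
    have hne : a - b ≠ 0 := by linarith
    have hgx : ∀ x, g x = (a - b) * h x + b := fun x => by
      rw [hh]; field_simp; ring
    have hhL1 : h ∈ L1 X := fun x => by
      constructor
      · exact div_nonneg (by linarith [hb x]) (by linarith)
      · rw [div_le_one (by linarith)]; linarith [ha x]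
    have key : ∀ r : X → ℝ, IsPMF r → linExp r g = (a - b) * linExp r h + b := by
      intro r hr
      unfold linExp
      rw [show (∑ x, r x * g x) = ∑ x, ((a - b) * (r x * h x) + r x * b) from
        Finset.sum_congr rfl fun x _ => by rw [hgx x]; ring,
        Finset.sum_add_distrib, ← Finset.mul_sum, ← Finset.sum_mul, hr.2, one_mul]
    have h1 : linExp p h ≤ upperExp M h := le_upperExp hM hp h
    have h2 : lowerExp M h ≤ linExp q h := lowerExp_le hM hq h
    have h3 := hD h hhL1
    rw [hep, heq, key p hpp, key q hqq]
    have : linExp p h - linExp q h ≤ D := by linarith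
    calc ((a - b) * linExp p h + b) - ((a - b) * linExp q h + b)
        = (a - b) * (linExp p h - linExp q h) := by ring
      _ ≤ (a - b) * D := mul_le_mul_of_nonneg_left this (by linarith)
      _ = D * (a - b) := by ring
  · obtain ⟨x⟩ := ‹Nonempty X›
    have hba : a = b := le_antisymm hab (le_trans (hb x) (ha x))
    have hgb : ∀ x, g x = b := fun x => le_antisymm (hba ▸ ha x) (hb x)
    have hpg : linExp p g = b := le_antisymm (linExp_le hpp fun x => (hgb x).le)
      (le_linExp hpp fun x => (hgb x).ge)
    have hqg : linExp q g = b := le_antisymm (linExp_le hqq fun x => (hgb x).le)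
      (le_linExp hqq fun x => (hgb x).ge)
    rw [hep, heq, hpg, hqg, hba]
    simp

end Stmt15Aux

namespace Stmt15Aux

variable {X : Type*} [Fintype X] [Nonempty X]
variable {T Tl : (X → ℝ) → (X → ℝ)} {M : X → Set (X → ℝ)}

lemma zero_mem_L1 : (0 : X → ℝ) ∈ L1 X := fun _ => ⟨le_rfl, zero_le_one⟩

lemma T_L1 (hM : ∀ x, IsCredal (M x)) (hT : ∀ f x, T f x = upperExp (M x) f)
    {f : X → ℝ} (hf : f ∈ L1 X) : T f ∈ L1 X := fun x => by
  rw [hT]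
  constructor
  · obtain ⟨p, hp, he⟩ := exists_upper (hM x) f
    rw [he]; exact le_linExp ((hM x).2.2.2 p hp) fun y => (hf y).1
  · exact upperExp_le_of (hM x) fun y => (hf y).2

lemma iter_L1 (hM : ∀ x, IsCredal (M x)) (hT : ∀ f x, T f x = upperExp (M x) f)
    (n : ℕ) {f : X → ℝ} (hf : f ∈ L1 X) : T^[n] f ∈ L1 X := by
  induction n with
  | zero => simpa using hf
  | succ n ih => rw [Function.iterate_succ_apply']; exact T_L1 hM hT ih

lemma dOpUL_bddAbove (hM : ∀ x, IsCredal (M x)) (hT : ∀ f x, T f x = upperExp (M x) f)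
    (hTl : ∀ f x, Tl f x = lowerExp (M x) f) :
    BddAbove ((fun f => ⨆ x, (T f x - Tl f x)) '' L1 X) := by
  refine ⟨1, ?_⟩
  rintro r ⟨f, hf, rfl⟩
  refine ciSup_le fun x => ?_
  have h1 : T f x ≤ 1 := by rw [hT]; exact upperExp_le_of (hM x) fun y => (hf y).2
  have h2 : 0 ≤ Tl f x := by rw [hTl]; exact le_lowerExp_of (hM x) fun y => (hf y).1
  linarith

lemma row_bound (hM : ∀ x, IsCredal (M x)) (hT : ∀ f x, T f x = upperExp (M x) f)
    (hTl : ∀ f x, Tl f x = lowerExp (M x) f) {h : X → ℝ} (hh : h ∈ L1 X) (x : X) :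
    T h x - Tl h x ≤ dOpUL T Tl := by
  have h1 : T h x - Tl h x ≤ ⨆ x', (T h x' - Tl h x') :=
    le_ciSup (f := fun x' => T h x' - Tl h x')
      (Set.Finite.bddAbove (Set.finite_range _)) x
  exact h1.trans (le_csSup (dOpUL_bddAbove hM hT hTl) ⟨h, hh, rfl⟩)

lemma Ihat_nonneg (hM : ∀ x, IsCredal (M x)) (hT : ∀ f x, T f x = upperExp (M x) f)
    (hTl : ∀ f x, Tl f x = lowerExp (M x) f) : 0 ≤ dOpUL T Tl := by
  have hx := Classical.arbitrary X
  have h0 : T (0 : X → ℝ) hx - Tl 0 hx = 0 := by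
    rw [hT, hTl, upperExp_zero (hM hx), lowerExp_zero (hM hx)]; ring
  have := row_bound hM hT hTl zero_mem_L1 hx
  linarith

lemma rho_bddAbove (hM : ∀ x, IsCredal (M x)) (hT : ∀ f x, T f x = upperExp (M x) f)
    (n : ℕ) :
    BddAbove {r | ∃ f ∈ L1 X, ∃ x y : X, r = |T^[n] f x - T^[n] f y|} := by
  refine ⟨1, ?_⟩
  rintro r ⟨f, hf, x, y, rfl⟩
  have hg := iter_L1 hM hT n hf
  have h1 := (hg x).1; have h2 := (hg x).2
  have h3 := (hg y).1; have h4 := (hg y).2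
  rw [abs_sub_le_iff]; constructor <;> linarith

lemma rho_bound (hM : ∀ x, IsCredal (M x)) (hT : ∀ f x, T f x = upperExp (M x) f)
    (n : ℕ) {f : X → ℝ} (hf : f ∈ L1 X) (x y : X) :
    |T^[n] f x - T^[n] f y| ≤ rho (T^[n]) :=
  le_csSup (rho_bddAbove hM hT n) ⟨f, hf, x, y, rfl⟩

lemma rho_nonneg (hM : ∀ x, IsCredal (M x)) (hT : ∀ f x, T f x = upperExp (M x) f)
    (n : ℕ) : 0 ≤ rho (T^[n]) := by
  have hx := Classical.arbitrary X
  have := rho_bound hM hT n zero_mem_L1 hx hx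
  simpa using le_trans (abs_nonneg _) this

lemma pointwise_bound (hM : ∀ x, IsCredal (M x)) (hT : ∀ f x, T f x = upperExp (M x) f)
    (hTl : ∀ f x, Tl f x = lowerExp (M x) f) (n : ℕ) {f : X → ℝ} (hf : f ∈ L1 X) :
    ∀ x, T^[n] f x - Tl^[n] f x ≤ dOpUL T Tl * ∑ i ∈ Finset.range n, rho (T^[i]) := by
  induction n with
  | zero => intro x; simp
  | succ n ih =>
    intro x
    have hg : T^[n] f ∈ L1 X := iter_L1 hM hT n hf
    obtain ⟨x₀, hx₀⟩ := Finite.exists_max (T^[n] f)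
    obtain ⟨y₀, hy₀⟩ := Finite.exists_min (T^[n] f)
    have h1 : T (T^[n] f) x - Tl (T^[n] f) x ≤ dOpUL T Tl * (T^[n] f x₀ - T^[n] f y₀) := by
      rw [hT, hTl]
      exact diff_le (hM x) hy₀ hx₀ fun h hh => by
        rw [← hT, ← hTl]; exact row_bound hM hT hTl hh x
    have hsp : T^[n] f x₀ - T^[n] f y₀ ≤ rho (T^[n]) :=
      (le_abs_self _).trans (rho_bound hM hT n hf x₀ y₀)
    have h2 : Tl (T^[n] f) x - Tl (Tl^[n] f) x ≤
        dOpUL T Tl * ∑ i ∈ Finset.range n, rho (T^[i]) := by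
      rw [hTl, hTl]
      have := lowerExp_add_le (hM x) (g := T^[n] f) (g' := Tl^[n] f)
        (c := dOpUL T Tl * ∑ i ∈ Finset.range n, rho (T^[i]))
        (fun y => by have := ih y; linarith)
      linarith
    have hI : 0 ≤ dOpUL T Tl := Ihat_nonneg hM hT hTl
    rw [Function.iterate_succ_apply', Function.iterate_succ_apply',
      Finset.sum_range_succ]
    have h1' : T (T^[n] f) x - Tl (T^[n] f) x ≤ dOpUL T Tl * rho (T^[n]) :=
      h1.trans (mul_le_mul_of_nonneg_left hsp hI)
    calc T (T^[n] f) x - Tl (Tl^[n] f) x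
        = (T (T^[n] f) x - Tl (T^[n] f) x) + (Tl (T^[n] f) x - Tl (Tl^[n] f) x) := by ring
      _ ≤ dOpUL T Tl * rho (T^[n]) + dOpUL T Tl * ∑ i ∈ Finset.range n, rho (T^[i]) :=
          add_le_add h1' h2
      _ = dOpUL T Tl * (∑ i ∈ Finset.range n, rho (T^[i]) + rho (T^[n])) := by ring

lemma I0_bddAbove {M0 : Set (X → ℝ)} (h0 : IsCredal M0) :
    BddAbove ((fun f => upperExp M0 f - lowerExp M0 f) '' L1 X) := by
  refine ⟨1, ?_⟩
  rintro r ⟨f, hf, rfl⟩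
  have h1 : upperExp M0 f ≤ 1 := upperExp_le_of h0 fun y => (hf y).2
  have h2 : 0 ≤ lowerExp M0 f := le_lowerExp_of h0 fun y => (hf y).1
  show upperExp M0 f - lowerExp M0 f ≤ 1
  linarith

lemma I0_bound {M0 : Set (X → ℝ)} (h0 : IsCredal M0) {h : X → ℝ} (hh : h ∈ L1 X) :
    upperExp M0 h - lowerExp M0 h ≤ dUL (upperExp M0) (lowerExp M0) :=
  le_csSup (I0_bddAbove h0) ⟨h, hh, rfl⟩

lemma I0_nonneg {M0 : Set (X → ℝ)} (h0 : IsCredal M0) :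
    0 ≤ dUL (upperExp M0) (lowerExp M0) := by
  have := I0_bound h0 (zero_mem_L1 (X := X))
  rw [upperExp_zero h0, lowerExp_zero h0] at this
  linarith

end Stmt15Aux

theorem stmt15 {X : Type*} [Fintype X] [Nonempty X]
    (M0 : Set (X → ℝ)) (h0 : IsCredal M0)
    (T Tl : (X → ℝ) → (X → ℝ)) (hP : IsTransPair T Tl) (n : ℕ) :
    dUL (fun f => upperExp M0 (T^[n] f)) (fun f => lowerExp M0 (Tl^[n] f)) ≤
      dUL (upperExp M0) (lowerExp M0) * rho (T^[n]) +
        dOpUL T Tl * ∑ i ∈ Finset.range n, rho (T^[i]) := by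
  obtain ⟨M, hM, hT, hTl⟩ := hP
  refine csSup_le ⟨_, ⟨0, Stmt15Aux.zero_mem_L1, rfl⟩⟩ ?_
  rintro r ⟨f, hf, rfl⟩
  simp only
  have hg : T^[n] f ∈ L1 X := Stmt15Aux.iter_L1 hM hT n hf
  obtain ⟨x₀, hx₀⟩ := Finite.exists_max (T^[n] f)
  obtain ⟨y₀, hy₀⟩ := Finite.exists_min (T^[n] f)
  have h1 : upperExp M0 (T^[n] f) - lowerExp M0 (T^[n] f) ≤
      dUL (upperExp M0) (lowerExp M0) * (T^[n] f x₀ - T^[n] f y₀) :=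
    Stmt15Aux.diff_le h0 hy₀ hx₀ fun h hh => Stmt15Aux.I0_bound h0 hh
  have hsp : T^[n] f x₀ - T^[n] f y₀ ≤ rho (T^[n]) :=
    (le_abs_self _).trans (Stmt15Aux.rho_bound hM hT n hf x₀ y₀)
  have hI0 : 0 ≤ dUL (upperExp M0) (lowerExp M0) := Stmt15Aux.I0_nonneg h0
  have h1' : upperExp M0 (T^[n] f) - lowerExp M0 (T^[n] f) ≤
      dUL (upperExp M0) (lowerExp M0) * rho (T^[n]) :=
    h1.trans (mul_le_mul_of_nonneg_left hsp hI0)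
  have h2 : lowerExp M0 (T^[n] f) - lowerExp M0 (Tl^[n] f) ≤
      dOpUL T Tl * ∑ i ∈ Finset.range n, rho (T^[i]) := by
    have := Stmt15Aux.lowerExp_add_le h0 (g := T^[n] f) (g' := Tl^[n] f)
      (c := dOpUL T Tl * ∑ i ∈ Finset.range n, rho (T^[i]))
      (fun y => by
        have := Stmt15Aux.pointwise_bound hM hT hTl n hf y; linarith)
    linarith
  linarith
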